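/- Let V = ℂ(q)[X, X⁻¹] with the sign representation: s·f(X) = −f(X⁻¹) and Y·f(X) = −f(q⁻²X). Then for every integer n, (1 − sY)·Xⁿ = Xⁿ − q^{−2n}X^{−n}, and this element is divisible by (1 − q²X²) in ℂ(q)[X, X⁻¹]; hence the operator U₀ = (1 − q²X²)⁻¹(1 − sY) preserves V. -/

import Mathlib

open LaurentPolynomial

noncomputable section

/-- The field `ℂ(q)`. -/
abbrev Kq : Type := RatFunc ℂ

/-- The parameter `q ∈ ℂ(q)`. -/
def qq : Kq := RatFunc.X

/-- Substitution `X ↦ c·X` on Laurent polynomials over `ℂ(q)`. -/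
def substScale (c : Kq) (f : LaurentPolynomial Kq) : LaurentPolynomial Kq :=
  Finsupp.sum f.coeff (fun n a => C (a * c ^ n) * T n)

/-- Substitution `X ↦ X⁻¹` on Laurent polynomials over `ℂ(q)`. -/
def substInv (f : LaurentPolynomial Kq) : LaurentPolynomial Kq :=
  Finsupp.sum f.coeff (fun n a => C a * T (-n))

/-- The sign representation action `s·f(X) = −f(X⁻¹)`. -/
def signS (f : LaurentPolynomial Kq) : LaurentPolynomial Kq := - substInv f

/-- The sign representation action `Y·f(X) = −f(q⁻²X)`. -/
def signY (f : LaurentPolynomial Kq) : LaurentPolynomial Kq := - substScale (qq ^ (-2 : ℤ)) f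

lemma qq_ne_zero : qq ≠ 0 := RatFunc.X_ne_zero

lemma substScale_single (c : Kq) (n : ℤ) (a : Kq) :
    substScale c (AddMonoidAlgebra.single n a) = C (a * c ^ n) * T n := by
  unfold substScale
  rw [AddMonoidAlgebra.coeff_single, Finsupp.sum_single_index]
  simp

lemma substInv_single (n : ℤ) (a : Kq) :
    substInv (AddMonoidAlgebra.single n a) = C a * T (-n) := by
  unfold substInv
  rw [AddMonoidAlgebra.coeff_single, Finsupp.sum_single_index]
  simp

lemma substScale_add (c : Kq) (f g : LaurentPolynomial Kq) :
    substScale c (f + g) = substScale c f + substScale c g := by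
  unfold substScale
  rw [AddMonoidAlgebra.coeff_add, Finsupp.sum_add_index] <;> intros <;> simp [add_mul, mul_add]

lemma substInv_add (f g : LaurentPolynomial Kq) :
    substInv (f + g) = substInv f + substInv g := by
  unfold substInv
  rw [AddMonoidAlgebra.coeff_add, Finsupp.sum_add_index] <;> intros <;> simp [add_mul]

lemma substInv_neg (f : LaurentPolynomial Kq) : substInv (-f) = - substInv f := by
  have h0 : substInv 0 = 0 := by unfold substInv; simp
  have := substInv_add f (-f)
  rw [add_neg_cancel, h0] at this
  exact eq_neg_of_add_eq_zero_right this.symm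

lemma sYs_single (n : ℤ) (a : Kq) :
    signS (signY (AddMonoidAlgebra.single n a)) = C (a * qq ^ (-(2 * n))) * T (-n) := by
  unfold signS signY
  rw [substScale_single, ← single_eq_C_mul_T, ← AddMonoidAlgebra.single_neg, substInv_single, map_neg, neg_mul, neg_neg]
  congr 2
  rw [← zpow_mul, neg_mul]

lemma nat_dvd (m : ℕ) :
    (1 - C (qq ^ 2) * T 2 : LaurentPolynomial Kq) ∣
      (1 - C (qq ^ (2 * m)) * T (2 * m)) := by
  have h := one_sub_dvd_one_sub_pow (C (qq ^ 2) * T 2 : LaurentPolynomial Kq) m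
  have e : (C (qq ^ 2) * T 2 : LaurentPolynomial Kq) ^ m = C (qq ^ (2 * m)) * T (2 * m) := by
    rw [mul_pow, ← map_pow, T_pow, ← pow_mul, mul_comm (m : ℤ) 2]
  rwa [e] at h

lemma key_dvd (n : ℤ) :
    (1 - C (qq ^ 2) * T 2 : LaurentPolynomial Kq) ∣
      (T n - C (qq ^ (-(2 * n))) * T (-n)) := by
  obtain ⟨m, rfl | rfl⟩ := Int.eq_nat_or_neg n
  · have e : (T m - C (qq ^ (-(2 * (m:ℤ)))) * T (-(m:ℤ)) : LaurentPolynomial Kq)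
        = (C (qq ^ (-(2 * (m:ℤ)))) * T (-(m:ℤ))) * -(1 - C (qq ^ (2 * m)) * T (2 * m)) := by
      rw [mul_neg, mul_sub, mul_one, neg_sub]
      congr 1
      rw [mul_mul_mul_comm, ← map_mul, ← T_add]
      rw [show (qq : Kq) ^ (-(2 * (m:ℤ))) * qq ^ (2 * m) = 1 by
        rw [← zpow_natCast qq (2*m), ← zpow_add₀ qq_ne_zero]; push_cast; ring_nf; exact zpow_zero qq]
      rw [show (-(m:ℤ) + 2 * m) = m by ring]
      simp
    rw [e]
    exact Dvd.dvd.mul_left ((nat_dvd m).neg_right) _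
  · have e : (T (-(m:ℤ)) - C (qq ^ (-(2 * -(m:ℤ)))) * T (-(-(m:ℤ))) : LaurentPolynomial Kq)
        = T (-(m:ℤ)) * (1 - C (qq ^ (2 * m)) * T (2 * m)) := by
      rw [mul_sub, mul_one]
      congr 1
      rw [neg_neg, ← mul_assoc, mul_comm (T (-(m:ℤ))) (C _), mul_assoc, ← T_add]
      rw [show (qq : Kq) ^ (-(2 * -(m:ℤ))) = qq ^ ((2 * m : ℕ) : ℤ) by push_cast; ring_nf]
      rw [zpow_natCast, show (-(m:ℤ) + 2 * m) = m by ring]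
    rw [e]
    exact Dvd.dvd.mul_left (nat_dvd m) _

lemma sYs_eq (f : LaurentPolynomial Kq) :
    signS (signY f) = substInv (substScale (qq ^ (-2 : ℤ)) f) := by
  unfold signS signY
  rw [substInv_neg, neg_neg]

lemma sYs_add (f g : LaurentPolynomial Kq) :
    signS (signY (f + g)) = signS (signY f) + signS (signY g) := by
  rw [sYs_eq, sYs_eq, sYs_eq, substScale_add, substInv_add]

/-- On the sign representation `V = ℂ(q)[X,X⁻¹]` of the unknot:
`(1 − sY)·Xⁿ = Xⁿ − q^{−2n}X^{−n}`, this is divisible by `1 − q²X²`, and hence the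
operator `U₀ = (1 − q²X²)⁻¹(1 − sY)` preserves `V`. -/
theorem unknot_U0_preserves :
    (∀ n : ℤ,
      T n - signS (signY (T n)) = T n - C (qq ^ (-(2 * n))) * T (-n) ∧
      (1 - C (qq ^ 2) * T 2 : LaurentPolynomial Kq) ∣
        (T n - C (qq ^ (-(2 * n))) * T (-n))) ∧
    (∀ f : LaurentPolynomial Kq, ∃ g : LaurentPolynomial Kq,
      (1 - C (qq ^ 2) * T 2) * g = f - signS (signY f)) := by
  constructor
  · intro n
    refine ⟨?_, key_dvd n⟩
    rw [show (T n : LaurentPolynomial Kq) = AddMonoidAlgebra.single n 1 from rfl, sYs_single, one_mul]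
  · intro f
    induction f using AddMonoidAlgebra.induction with
    | zero =>
      refine ⟨0, ?_⟩
      rw [mul_zero, sYs_eq]
      unfold substScale substInv
      simp
    | single_add n a f hnf ha ih =>
      obtain ⟨g, hg⟩ := ih
      obtain ⟨g1, hg1⟩ := key_dvd n
      refine ⟨C a * g1 + g, ?_⟩
      rw [sYs_add, sYs_single, single_eq_C_mul_T, map_mul]
      linear_combination C a * hg1.symm + hg

end
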